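/- Let n ≥ 2 be an integer and z ∈ ℂ with |z| > 1. If μ₂(F_z) > 0 and μ₂((F_z + i) ∩ (F_z + i')) = 0 for all distinct digits i, i' ∈ {0,1,…,n−1}, then |z|² = n. -/

import Mathlib

open MeasureTheory

/-- The fractional-part set `F_z` for base `z` and digits `{0,…,n-1}`. -/
def Fset (n : ℕ) (z : ℂ) : Set ℂ :=
  { x | ∃ a : ℕ → ℕ, (∀ i, a i < n) ∧ x = ∑' i : ℕ, (a i : ℂ) * z⁻¹ ^ (i + 1) }

lemma Fset_summable {n : ℕ} {z : ℂ} (hz : 1 < ‖z‖) {a : ℕ → ℕ}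
    (ha : ∀ i, a i < n) (k : ℕ) :
    Summable (fun i : ℕ => (a i : ℂ) * z⁻¹ ^ (i + k)) := by
  have hr : ‖z⁻¹‖ < 1 := by
    rw [norm_inv]
    exact inv_lt_one_of_one_lt₀ hz
  apply Summable.of_norm_bounded (g := fun i : ℕ => (n : ℝ) * ‖z⁻¹‖ ^ (i + k))
  · have h1 : Summable (fun i : ℕ => ‖z⁻¹‖ ^ i) :=
      summable_geometric_of_lt_one (by positivity) hr
    have h2 : Summable (fun i : ℕ => ‖z⁻¹‖ ^ (i + k)) := by
      simpa [pow_add] using h1.mul_right (‖z⁻¹‖ ^ k)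
    exact h2.mul_left _
  · intro i
    rw [norm_mul, norm_pow]
    gcongr
    simp only [Complex.norm_natCast]
    exact_mod_cast (ha i).le

/-- The shift computation: multiplying a series by `z` pops the first digit. -/
lemma Fset_shift {n : ℕ} {z : ℂ} (hz : 1 < ‖z‖) {a : ℕ → ℕ}
    (ha : ∀ i, a i < n) :
    z * (∑' i : ℕ, (a i : ℂ) * z⁻¹ ^ (i + 1)) =
      (a 0 : ℂ) + ∑' i : ℕ, (a (i + 1) : ℂ) * z⁻¹ ^ (i + 1) := by
  have hz0 : z ≠ 0 := by
    intro h
    rw [h] at hz; simp at hz; linarith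
  have hsum : Summable (fun i : ℕ => (a i : ℂ) * z⁻¹ ^ i) := Fset_summable hz ha 0
  have key : z * (∑' i : ℕ, (a i : ℂ) * z⁻¹ ^ (i + 1)) = ∑' i : ℕ, (a i : ℂ) * z⁻¹ ^ i := by
    rw [← tsum_mul_left]
    congr 1; ext i
    field_simp [pow_succ]
    linear_combination ((a i : ℂ) * (1 / z) ^ i) * mul_one_div_cancel hz0
  rw [key, hsum.tsum_eq_zero_add]
  simp

lemma Fset_isCompact (n : ℕ) (hn : 1 ≤ n) {z : ℂ} (hz : 1 < ‖z‖) :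
    IsCompact (Fset n z) := by
  have hn' : NeZero n := ⟨by omega⟩
  set f : (ℕ → Fin n) → ℂ := fun a => ∑' i : ℕ, ((a i : ℕ) : ℂ) * z⁻¹ ^ (i + 1) with hf
  have hrange : Fset n z = Set.range f := by
    ext x
    constructor
    · rintro ⟨a, ha, rfl⟩
      exact ⟨fun i => ⟨a i, ha i⟩, rfl⟩
    · rintro ⟨a, rfl⟩
      exact ⟨fun i => (a i : ℕ), fun i => (a i).isLt, rfl⟩
  rw [hrange]
  apply isCompact_range
  have hr : ‖z⁻¹‖ < 1 := by
    rw [norm_inv]; exact inv_lt_one_of_one_lt₀ hz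
  apply continuous_tsum (u := fun i : ℕ => (n : ℝ) * ‖z⁻¹‖ ^ (i + 1))
  · intro i
    exact (Continuous.comp (continuous_of_discreteTopology
      (f := fun j : Fin n => ((j : ℕ) : ℂ))) (continuous_apply i)).mul continuous_const
  · have h1 : Summable (fun i : ℕ => ‖z⁻¹‖ ^ i) :=
      summable_geometric_of_lt_one (by positivity) hr
    have h2 : Summable (fun i : ℕ => ‖z⁻¹‖ ^ (i + 1)) := by
      simpa [pow_add] using h1.mul_right (‖z⁻¹‖)
    exact h2.mul_left _
  · intro i a
    rw [norm_mul, norm_pow]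
    gcongr
    simp only [Complex.norm_natCast]
    exact_mod_cast (a i).isLt.le

/-- Self-similarity: `z • F = ⋃_{i<n} (F + i)`. -/
lemma Fset_selfsimilar (n : ℕ) {z : ℂ} (hz : 1 < ‖z‖) :
    (fun x => z * x) '' Fset n z =
      ⋃ i ∈ Finset.range n, (fun x => x + (i : ℂ)) '' Fset n z := by
  have hz0 : z ≠ 0 := by
    intro h; rw [h] at hz; simp at hz; linarith
  ext y
  simp only [Set.mem_image, Set.mem_iUnion, Finset.mem_range]
  constructor
  · rintro ⟨x, ⟨a, ha, rfl⟩, rfl⟩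
    refine ⟨a 0, ha 0, ∑' i : ℕ, ((a (i + 1) : ℕ) : ℂ) * z⁻¹ ^ (i + 1),
      ⟨fun i => a (i + 1), fun i => ha _, rfl⟩, ?_⟩
    rw [Fset_shift hz ha]
    ring
  · rintro ⟨i, hi, x, ⟨a, ha, rfl⟩, rfl⟩
    set b : ℕ → ℕ := fun j => Nat.rec i (fun k _ => a k) j with hb
    have hb0 : b 0 = i := rfl
    have hbS : ∀ j, b (j + 1) = a j := fun j => rfl
    have hbn : ∀ j, b j < n := by
      intro j
      cases j with
      | zero => exact hi
      | succ k => exact ha k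
    refine ⟨∑' j : ℕ, (b j : ℂ) * z⁻¹ ^ (j + 1), ⟨b, hbn, rfl⟩, ?_⟩
    rw [Fset_shift hz hbn, hb0]
    simp only [hbS]
    ring

theorem stmt_4 (n : ℕ) (hn : 2 ≤ n) (z : ℂ) (hz : 1 < ‖z‖)
    (hpos : 0 < volume (Fset n z))
    (hdisj : ∀ i i' : ℕ, i < n → i' < n → i ≠ i' →
      volume (((fun x => x + (i : ℂ)) '' Fset n z) ∩
              ((fun x => x + (i' : ℂ)) '' Fset n z)) = 0) :
    ‖z‖ ^ 2 = n := by
  have hK : IsCompact (Fset n z) := Fset_isCompact n (by omega) hz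
  have hfin : volume (Fset n z) < ⊤ := hK.measure_lt_top
  -- measure of the scaled set
  have hdet : LinearMap.det (LinearMap.mul ℝ ℂ z) = Complex.normSq z := by
    have := Algebra.norm_complex_apply z
    rwa [Algebra.norm_apply, Algebra.coe_lmul_eq_mul] at this
  have hsmul : volume ((fun x => z * x) '' Fset n z) =
      ENNReal.ofReal (Complex.normSq z) * volume (Fset n z) := by
    have := Measure.addHaar_image_linearMap (volume : Measure ℂ) (LinearMap.mul ℝ ℂ z)
      (Fset n z)
    rw [hdet] at this
    rw [abs_of_nonneg (Complex.normSq_nonneg z)] at this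
    simpa [LinearMap.mul_apply'] using this
  -- measure of the union
  have htrans : ∀ i : ℕ, volume ((fun x => x + (i : ℂ)) '' Fset n z) = volume (Fset n z) := by
    intro i
    rw [Set.image_add_right, measure_preimage_add_right]
  have hunion : volume (⋃ i ∈ Finset.range n, (fun x => x + (i : ℂ)) '' Fset n z) =
      n * volume (Fset n z) := by
    rw [measure_biUnion_finset₀]
    · rw [Finset.sum_congr rfl (fun i _ => htrans i)]
      simp [Finset.sum_const, mul_comm]
    · intro i hi i' hi' hne
      simp only [Finset.mem_coe, Finset.mem_range] at hi hi'
      exact hdisj i i' hi hi' hne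
    · intro i _
      exact ((hK.image (by continuity)).measurableSet).nullMeasurableSet
  have heq : ENNReal.ofReal (Complex.normSq z) * volume (Fset n z) =
      n * volume (Fset n z) := by
    rw [← hsmul, Fset_selfsimilar n hz, hunion]
  have hcancel : ENNReal.ofReal (Complex.normSq z) = n :=
    (ENNReal.mul_left_inj hpos.ne' hfin.ne).mp heq
  have : Complex.normSq z = n := by
    have hn' : ENNReal.ofReal (Complex.normSq z) = ENNReal.ofReal (n : ℝ) := by
      rw [hcancel, ENNReal.ofReal_natCast]
    rwa [ENNReal.ofReal_eq_ofReal_iff (Complex.normSq_nonneg z) (by positivity)] at hn'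
  rw [Complex.sq_norm, this]
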